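/- If two trapezoids with base angles 0 < βᵢ ≤ αᵢ ≤ π/2 have equal angle invariants F(α₁) + F(β₁) = F(α₂) + F(β₂) where F(x) = 1/(x(π-x)), and the first is a rectangle (α₁ = β₁ = π/2), then the second is also a rectangle (α₂ = β₂ = π/2). -/

import Mathlib

open Real

lemma aux_F (x : ℝ) (hx : 0 < x) (hx2 : x ≤ π / 2) :
    4 / π ^ 2 ≤ 1 / (x * (π - x)) ∧ (1 / (x * (π - x)) = 4 / π ^ 2 → x = π / 2) := by
  have hπ := pi_pos
  have hpos : 0 < x * (π - x) := by nlinarith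
  constructor
  · rw [div_le_div_iff₀ (by positivity) hpos]
    nlinarith [sq_nonneg (x - π / 2)]
  · intro h
    have hx4 : x * (π - x) = π ^ 2 / 4 := by
      field_simp at h; rw [div_eq_iff (by linarith)] at h; nlinarith
    have : (x - π / 2) ^ 2 = 0 := by nlinarith
    have := pow_eq_zero_iff (n := 2) (by norm_num) |>.mp this
    linarith

theorem stmt_17 (α₁ β₁ α₂ β₂ : ℝ) (hβ₁ : 0 < β₁) (hβα₁ : β₁ ≤ α₁) (hα₁ : α₁ ≤ π / 2)
    (hβ₂ : 0 < β₂) (hβα₂ : β₂ ≤ α₂) (hα₂ : α₂ ≤ π / 2)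
    (hq : 1 / (α₁ * (π - α₁)) + 1 / (β₁ * (π - β₁))
        = 1 / (α₂ * (π - α₂)) + 1 / (β₂ * (π - β₂)))
    (hrect : α₁ = π / 2 ∧ β₁ = π / 2) : α₂ = π / 2 ∧ β₂ = π / 2 := by
  obtain ⟨h1, h2⟩ := hrect
  have hπ := pi_pos
  have h0α₂ : 0 < α₂ := lt_of_lt_of_le hβ₂ hβα₂
  have hβ₂2 : β₂ ≤ π / 2 := le_trans hβα₂ hα₂
  obtain ⟨ha1, ha2⟩ := aux_F α₂ h0α₂ hα₂
  obtain ⟨hb1, hb2⟩ := aux_F β₂ hβ₂ hβ₂2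
  subst h1 h2
  have hlhs : 1 / (π / 2 * (π - π / 2)) + 1 / (π / 2 * (π - π / 2)) = 8 / π ^ 2 := by
    rw [show π / 2 * (π - π / 2) = π ^ 2 / 4 from by ring, one_div_div]; ring
  have h8 : 8 / π ^ 2 = 4 / π ^ 2 + 4 / π ^ 2 := by ring
  rw [hlhs] at hq
  have hA : 1 / (α₂ * (π - α₂)) = 4 / π ^ 2 := by linarith
  have hB : 1 / (β₂ * (π - β₂)) = 4 / π ^ 2 := by linarith
  exact ⟨ha2 hA, hb2 hB⟩
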